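/- Suppose every quasi-component of X is an intersection of countably many clopen sets. Then Bob has a winning strategy in G₁(C_O, C_O) on X if and only if X is a union of countably many quasi-components. -/

import Mathlib

open Set

section Defs

variable (X : Type*) [TopologicalSpace X]

/-- A clopen cover of `X`. -/
def IsClopenCover (U : Set (Set X)) : Prop :=
  (∀ V ∈ U, IsClopen V) ∧ ⋃₀ U = (univ : Set X)

/-- An open cover of `X`. -/
def IsOpenCover (U : Set (Set X)) : Prop :=
  (∀ V ∈ U, IsOpen V) ∧ ⋃₀ U = (univ : Set X)

/-- The selection principle `S₁(C_O, C_O)` (mildly Rothberger). -/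
def S1CC : Prop :=
  ∀ U : ℕ → Set (Set X), (∀ n, IsClopenCover X (U n)) →
    ∃ V : ℕ → Set X, (∀ n, V n ∈ U n) ∧ (⋃ n, V n) = (univ : Set X)

/-- The Rothberger selection principle `S₁(O, O)`. -/
def S1OO : Prop :=
  ∀ U : ℕ → Set (Set X), (∀ n, IsOpenCover X (U n)) →
    ∃ V : ℕ → Set X, (∀ n, V n ∈ U n) ∧ (⋃ n, V n) = (univ : Set X)

end Defs

/-- History of the first `n` moves of a play `b`. -/
def hist {α : Type*} (b : ℕ → α) (n : ℕ) : List α := List.ofFn (fun i : Fin n => b i)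

section Games

variable (X : Type*) [TopologicalSpace X]

/-- Alice has a winning strategy in `G₁(C_O, C_O)`. -/
def AliceWinsG1CC : Prop :=
  ∃ σ : List (Set X) → Set (Set X),
    (∀ h, IsClopenCover X (σ h)) ∧
    ∀ b : ℕ → Set X, (∀ n, b n ∈ σ (hist b n)) → (⋃ n, b n) ≠ (univ : Set X)

/-- Bob has a winning strategy in `G₁(C_O, C_O)`. -/
def BobWinsG1CC : Prop :=
  ∃ τ : List (Set (Set X)) → Set X,
    ∀ U : ℕ → Set (Set X), (∀ n, IsClopenCover X (U n)) →
      (∀ n, τ (hist U (n+1)) ∈ U n) ∧ (⋃ n, τ (hist U (n+1))) = (univ : Set X)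

/-- Alice has a winning strategy in the Rothberger game `G₁(O, O)`. -/
def AliceWinsG1OO : Prop :=
  ∃ σ : List (Set X) → Set (Set X),
    (∀ h, IsOpenCover X (σ h)) ∧
    ∀ b : ℕ → Set X, (∀ n, b n ∈ σ (hist b n)) → (⋃ n, b n) ≠ (univ : Set X)

/-- Bob has a winning strategy in the Rothberger game `G₁(O, O)`. -/
def BobWinsG1OO : Prop :=
  ∃ τ : List (Set (Set X)) → Set X,
    ∀ U : ℕ → Set (Set X), (∀ n, IsOpenCover X (U n)) →
      (∀ n, τ (hist U (n+1)) ∈ U n) ∧ (⋃ n, τ (hist U (n+1))) = (univ : Set X)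

/-- The quasi-component of a point: the intersection of all clopen sets containing it. -/
def quasiComponent (x : X) : Set X := ⋂₀ {U : Set X | IsClopen U ∧ x ∈ U}

/-- Alice has a winning strategy in the point-clopen game `PC(X)`. -/
def AliceWinsPC : Prop :=
  ∃ φ : List (Set X) → X,
    ∀ b : ℕ → Set X, (∀ n, IsClopen (b n) ∧ φ (hist b n) ∈ b n) →
      (⋃ n, b n) = (univ : Set X)

/-- Bob has a winning strategy in the point-clopen game `PC(X)`. -/
def BobWinsPC : Prop :=
  ∃ ψ : List X → Set X,
    ∀ x : ℕ → X,
      (∀ n, IsClopen (ψ (hist x (n+1))) ∧ x n ∈ ψ (hist x (n+1))) ∧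
      (⋃ n, ψ (hist x (n+1))) ≠ (univ : Set X)

/-- Alice has a winning strategy in the point-open game `PO(X)`. -/
def AliceWinsPO : Prop :=
  ∃ φ : List (Set X) → X,
    ∀ b : ℕ → Set X, (∀ n, IsOpen (b n) ∧ φ (hist b n) ∈ b n) →
      (⋃ n, b n) = (univ : Set X)

/-- Bob has a winning strategy in the point-open game `PO(X)`. -/
def BobWinsPO : Prop :=
  ∃ ψ : List X → Set X,
    ∀ x : ℕ → X,
      (∀ n, IsOpen (ψ (hist x (n+1))) ∧ x n ∈ ψ (hist x (n+1))) ∧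
      (⋃ n, ψ (hist x (n+1))) ≠ (univ : Set X)

/-- Alice has a winning strategy in the quasi-component-clopen game `QC(X)`. -/
def AliceWinsQC : Prop :=
  ∃ φ : List (Set X) → Set X,
    (∀ h, ∃ x : X, φ h = quasiComponent X x) ∧
    ∀ b : ℕ → Set X, (∀ n, IsClopen (b n) ∧ φ (hist b n) ⊆ b n) →
      (⋃ n, b n) = (univ : Set X)

/-- Bob has a winning strategy in the quasi-component-clopen game `QC(X)`. -/
def BobWinsQC : Prop :=
  ∃ ψ : List (Set X) → Set X,
    ∀ A : ℕ → Set X, (∀ n, ∃ x : X, A n = quasiComponent X x) →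
      (∀ n, IsClopen (ψ (hist A (n+1))) ∧ A n ⊆ ψ (hist A (n+1))) ∧
      (⋃ n, ψ (hist A (n+1))) ≠ (univ : Set X)

end Games

section MyAux
variable {X : Type*} [TopologicalSpace X]

lemma myUnivCover : IsClopenCover X {univ} := by
  constructor
  · rintro V hV
    rw [Set.mem_singleton_iff] at hV
    subst hV; exact isClopen_univ
  · simp

lemma myHistSucc {α : Type*} (c : ℕ → α) (n : ℕ) :
    hist c (n + 1) = hist c n ++ [c n] := by
  show List.ofFn _ = _
  rw [List.ofFn_succ']
  simp [List.concat_eq_append, hist]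

lemma myLegality (τ : List (Set (Set X)) → Set X)
    (hτ : ∀ U : ℕ → Set (Set X), (∀ n, IsClopenCover X (U n)) →
      (∀ n, τ (hist U (n+1)) ∈ U n) ∧ (⋃ n, τ (hist U (n+1))) = (univ : Set X))
    (L : List (Set (Set X))) (hL : ∀ C ∈ L, IsClopenCover X C)
    (C : Set (Set X)) (hC : IsClopenCover X C) :
    τ (L ++ [C]) ∈ C := by
  set M := L ++ [C] with hM
  have hlen : M.length = L.length + 1 := by simp [hM]
  set U : ℕ → Set (Set X) := fun n => M.getD n {univ} with hU
  have hUcov : ∀ n, IsClopenCover X (U n) := by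
    intro n
    by_cases h : n < M.length
    · have hmem : U n ∈ M := by
        rw [hU]
        simp only []
        rw [List.getD_eq_getElem _ _ h]
        exact List.getElem_mem _
      rw [hM] at hmem
      rcases List.mem_append.mp hmem with h1 | h1
      · exact hL _ h1
      · rw [List.mem_singleton] at h1; rw [h1]; exact hC
    · have h2 : U n = {univ} := List.getD_eq_default _ _ (not_lt.mp h)
      rw [h2]; exact myUnivCover
  have hhist : hist U (L.length + 1) = M := by
    refine List.ext_getElem ?_ ?_
    · simp only [hist, List.length_ofFn, hlen]
    · intro i h1 h2
      simp only [hist, List.getElem_ofFn, hU]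
      exact List.getD_eq_getElem M {univ} h2
  have hfin : U L.length = C := by
    simp only [hU, hM]
    simp
  have hmem := (hτ U hUcov).1 L.length
  rw [hhist, hfin] at hmem
  exact hmem

lemma myGalvin (τ : List (Set (Set X)) → Set X)
    (hτ : ∀ U : ℕ → Set (Set X), (∀ n, IsClopenCover X (U n)) →
      (∀ n, τ (hist U (n+1)) ∈ U n) ∧ (⋃ n, τ (hist U (n+1))) = (univ : Set X))
    (H : List (Set (Set X))) (hH : ∀ C ∈ H, IsClopenCover X C) :
    ∃ x : X, ∀ U : Set X, IsClopen U → quasiComponent X x ⊆ U →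
      ∃ C, IsClopenCover X C ∧ τ (H ++ [C]) ⊆ U := by
  by_contra hcon
  push_neg at hcon
  choose U hU1 hU2 hU3 using hcon
  have hC : IsClopenCover X (Set.range U) := by
    constructor
    · rintro V ⟨x, rfl⟩; exact hU1 x
    · apply Set.eq_univ_of_forall
      intro x
      exact ⟨U x, ⟨x, rfl⟩, hU2 x (fun t ht => ht.2)⟩
  obtain ⟨x, hx⟩ := myLegality τ hτ (C := Set.range U) H hH hC
  exact hU3 x _ hC (hx ▸ subset_rfl)
end MyAux

section MyMain
variable {X : Type*} [TopologicalSpace X]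

lemma myForward (hG : ∀ x : X, ∃ V : ℕ → Set X, (∀ n, IsClopen (V n)) ∧
      quasiComponent X x = ⋂ n, V n)
    (hB : BobWinsG1CC X) :
    ∃ f : ℕ → X, (⋃ n, quasiComponent X (f n)) = (Set.univ : Set X) := by
  classical
  obtain ⟨τ, hτ⟩ := hB
  haveI hne : Nonempty X := by
    obtain ⟨x, -⟩ := myGalvin τ hτ [] (by simp)
    exact ⟨x⟩
  set Vs : X → ℕ → Set X := fun x => (hG x).choose with hVs
  have hVsC : ∀ x k, IsClopen (Vs x k) := fun x k => (hG x).choose_spec.1 k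
  have hVsQ : ∀ x, quasiComponent X x = ⋂ k, Vs x k := fun x => (hG x).choose_spec.2
  have key : ∀ H : List (Set (Set X)), ∃ x : X, ∀ k : ℕ, ∃ C : Set (Set X),
      IsClopenCover X C ∧ ((∀ D ∈ H, IsClopenCover X D) → τ (H ++ [C]) ⊆ Vs x k) := by
    intro H
    by_cases hH : ∀ D ∈ H, IsClopenCover X D
    · obtain ⟨x, hx⟩ := myGalvin τ hτ H hH
      refine ⟨x, fun k => ?_⟩
      obtain ⟨C, hC1, hC2⟩ := hx (Vs x k) (hVsC x k)
        (by rw [hVsQ x]; exact iInter_subset _ k)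
      exact ⟨C, hC1, fun _ => hC2⟩
    · exact ⟨Classical.arbitrary X, fun k => ⟨{univ}, myUnivCover, fun h => absurd h hH⟩⟩
  choose pick cov hcov1 hcov2 using key
  set Hfun : List ℕ → List (Set (Set X)) :=
    fun s => List.rec ([] : List (Set (Set X))) (fun k _ ih => ih ++ [cov ih k]) s with hHfun
  have Hnil : Hfun [] = [] := rfl
  have Hcons : ∀ k s, Hfun (k :: s) = Hfun s ++ [cov (Hfun s) k] := fun k s => rfl
  have Hlegal : ∀ s : List ℕ, ∀ D ∈ Hfun s, IsClopenCover X D := by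
    intro s
    induction s with
    | nil => intro D hD; rw [Hnil] at hD; exact absurd hD List.not_mem_nil
    | cons k s ih =>
      intro D hD
      rw [Hcons] at hD
      rcases List.mem_append.mp hD with h | h
      · exact ih D h
      · rw [List.mem_singleton] at h; rw [h]; exact hcov1 _ _
  have Hsub : ∀ (s : List ℕ) (k : ℕ), τ (Hfun (k :: s)) ⊆ Vs (pick (Hfun s)) k := by
    intro s k
    rw [Hcons]
    exact hcov2 (Hfun s) k (Hlegal s)
  refine ⟨fun n => pick (Hfun (Denumerable.ofNat (List ℕ) n)), ?_⟩
  apply Set.eq_univ_of_forall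
  intro z
  by_contra hz
  rw [mem_iUnion] at hz
  push_neg at hz
  have hz' : ∀ s : List ℕ, z ∉ quasiComponent X (pick (Hfun s)) := by
    intro s hmem
    refine hz (Encodable.encode s) ?_
    rw [Denumerable.ofNat_encode]
    exact hmem
  have hk : ∀ s : List ℕ, ∃ k, z ∉ Vs (pick (Hfun s)) k := by
    intro s
    by_contra h
    push_neg at h
    exact hz' s (by rw [hVsQ]; exact mem_iInter.mpr h)
  choose kk hkk using hk
  set b : ℕ → List ℕ := fun n => Nat.rec [] (fun _ ih => kk ih :: ih) n with hb
  have hb0 : b 0 = [] := rfl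
  have hbs : ∀ n, b (n+1) = kk (b n) :: b n := fun n => rfl
  set U : ℕ → Set (Set X) := fun n => cov (Hfun (b n)) (kk (b n)) with hU
  have hUc : ∀ n, IsClopenCover X (U n) := fun n => hcov1 _ _
  have hhist : ∀ n, hist U n = Hfun (b n) := by
    intro n
    induction n with
    | zero => rfl
    | succ n ih =>
      rw [myHistSucc, ih, hbs n, Hcons]
  obtain ⟨n, hn⟩ : ∃ n, z ∈ τ (hist U (n+1)) := by
    have h2 := (hτ U hUc).2
    have : z ∈ ⋃ n, τ (hist U (n+1)) := h2 ▸ mem_univ z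
    exact mem_iUnion.mp this
  rw [hhist (n+1), hbs n] at hn
  exact hkk (b n) (Hsub (b n) (kk (b n)) hn)

lemma myBackward (f : ℕ → X)
    (hf : (⋃ n, quasiComponent X (f n)) = (Set.univ : Set X)) :
    BobWinsG1CC X := by
  classical
  refine ⟨fun L => if h : ∃ W, W ∈ L.getD (L.length - 1) ∅ ∧ f (L.length - 1) ∈ W
    then h.choose else ∅, ?_⟩
  intro U hU
  have hlen : ∀ n, (hist U (n+1)).length = n + 1 := by
    intro n; simp [hist]
  have hget : ∀ n, (hist U (n+1)).getD n ∅ = U n := by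
    intro n
    have h1 : n < (hist U (n+1)).length := by rw [hlen]; omega
    rw [List.getD_eq_getElem _ _ h1]
    simp only [hist, List.getElem_ofFn]
  have key : ∀ n, ∃ W, W ∈ U n ∧ f n ∈ W := by
    intro n
    have : f n ∈ ⋃₀ U n := (hU n).2 ▸ mem_univ _
    obtain ⟨W, hW, hfW⟩ := this
    exact ⟨W, hW, hfW⟩
  have heq : ∀ n, (if h : ∃ W, W ∈ (hist U (n+1)).getD ((hist U (n+1)).length - 1) ∅ ∧
        f ((hist U (n+1)).length - 1) ∈ W then h.choose else ∅) = (key n).choose := by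
    intro n
    have e : (hist U (n+1)).length - 1 = n := by rw [hlen]; omega
    rw [e, hget n]
    exact dif_pos (key n)
  constructor
  · intro n
    show (if h : _ then _ else _) ∈ U n
    rw [heq n]
    exact (key n).choose_spec.1
  · apply Set.eq_univ_of_forall
    intro z
    have : z ∈ ⋃ n, quasiComponent X (f n) := hf ▸ mem_univ z
    obtain ⟨n, hn⟩ := mem_iUnion.mp this
    refine mem_iUnion.mpr ⟨n, ?_⟩
    show z ∈ (if h : _ then _ else _)
    rw [heq n]
    have hm : (key n).choose ∈ {V : Set X | IsClopen V ∧ f n ∈ V} :=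
      ⟨(hU n).1 _ (key n).choose_spec.1, (key n).choose_spec.2⟩
    exact sInter_subset_of_mem hm hn

end MyMain

/-- If every quasi-component of `X` is an intersection of countably many clopen
sets, then Bob has a winning strategy in `G₁(C_O, C_O)` iff `X` is a union of
countably many quasi-components. -/
theorem stmt12 (X : Type*) [TopologicalSpace X]
    (hG : ∀ x : X, ∃ V : ℕ → Set X, (∀ n, IsClopen (V n)) ∧
      quasiComponent X x = ⋂ n, V n) :
    BobWinsG1CC X ↔
      ∃ f : ℕ → X, (⋃ n, quasiComponent X (f n)) = (Set.univ : Set X) := by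
  constructor
  · exact myForward hG
  · rintro ⟨f, hf⟩
    exact myBackward f hf
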